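/- Let n be a positive integer, d ≥ 1 a real, ε ∈ (0,1), and λ ≤ ε/(2 log n). Then every graph G on n vertices with average degree at least d contains a subgraph which is a (d', λ, ε)-expander for some d' ≥ d/2. -/

import Mathlib

/-- The average degree of a finite graph: `2 e(G) / v(G)`. -/
noncomputable def avgDeg {V : Type*} [Fintype V] (G : SimpleGraph V) : ℝ :=
  2 * G.edgeSet.ncard / Fintype.card V

/-- The average degree of a subgraph: `2 e(H) / v(H)`. -/
noncomputable def subAvg {V : Type*} {G : SimpleGraph V} (H : G.Subgraph) : ℝ :=
  2 * H.edgeSet.ncard / H.verts.ncard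

/-- A subgraph `H` of `G` is `d`-minimal. -/
def SubIsMinimal {V : Type*} {G : SimpleGraph V} (H : G.Subgraph) (d : ℝ) : Prop :=
  d ≤ subAvg H ∧ ∀ H' : G.Subgraph, H' < H → subAvg H' < d

/-- Average degree induced on `S ⊆ H.verts` in a subgraph `H`. -/
noncomputable def subIndAvg {V : Type*} {G : SimpleGraph V} (H : G.Subgraph) (S : Set V) : ℝ :=
  2 * ({e ∈ H.edgeSet | ∀ v ∈ e, v ∈ S} : Set (Sym2 V)).ncard / S.ncard

/-- A subgraph `H` of `G` is a `(d, λ, ε)`-expander: `H` is `d`-minimal and every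
`S ⊆ V(H)` with `|S| ≤ (1 - ε) v(H)` induces average degree at most `(1 - λ) d`. -/
def SubIsExpander {V : Type*} {G : SimpleGraph V} (H : G.Subgraph) (d lam eps : ℝ) : Prop :=
  SubIsMinimal H d ∧ ∀ S : Set V, S ⊆ H.verts →
    (S.ncard : ℝ) ≤ (1 - eps) * H.verts.ncard → subIndAvg H S ≤ (1 - lam) * d

lemma my_subgraph_finite {V : Type*} [Fintype V] (G : SimpleGraph V) : Finite G.Subgraph := by
  apply Finite.of_injective (fun H : G.Subgraph => (H.verts, H.Adj))
  intro H K h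
  obtain ⟨h1, h2⟩ := Prod.mk.injEq .. ▸ h
  exact SimpleGraph.Subgraph.ext h1 h2

lemma my_induce_edgeSet {V : Type*} {G : SimpleGraph V} (H : G.Subgraph) (S : Set V) :
    (H.induce S).edgeSet = {e ∈ H.edgeSet | ∀ v ∈ e, v ∈ S} := by
  ext e
  induction e using Sym2.ind with
  | _ a b =>
    simp only [SimpleGraph.Subgraph.mem_edgeSet, SimpleGraph.Subgraph.induce_adj,
      Set.mem_setOf_eq, Sym2.mem_iff]
    constructor
    · rintro ⟨ha, hb, hadj⟩; exact ⟨hadj, by rintro v (rfl|rfl) <;> assumption⟩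
    · rintro ⟨hadj, hmem⟩; exact ⟨hmem a (Or.inl rfl), hmem b (Or.inr rfl), hadj⟩

lemma my_arith {d eps lam L L' c : ℝ} (hd : 1 ≤ d) (heps0 : 0 < eps) (hlam : 0 < lam)
    (hstep : L + eps ≤ L') (hinv : d * (1 - lam * L / eps) ≤ c) (hcd : c ≤ d) :
    d * (1 - lam * L' / eps) ≤ (1 - lam) * c := by
  have hd0 : (0:ℝ) < d := lt_of_lt_of_le one_pos hd
  have h1 : lam * (L + eps) / eps ≤ lam * L' / eps := by
    gcongr <;> first | exact hlam.le | exact hstep | positivity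
  have h2 : lam * (L + eps) / eps = lam * L / eps + lam := by
    field_simp
  have h3 : d * (lam * L / eps + lam) ≤ d * (lam * L' / eps) :=
    mul_le_mul_of_nonneg_left (h2 ▸ h1) hd0.le
  have h4 : lam * c ≤ lam * d := mul_le_mul_of_nonneg_left hcd hlam.le
  nlinarith [h3, h4, hinv]

lemma my_aux {V : Type*} [Fintype V] {G : SimpleGraph V} {d eps lam : ℝ}
    (hd : 1 ≤ d) (heps0 : 0 < eps) (heps1 : eps < 1) (hlam : 0 < lam) (hlam1 : lam < 1)
    (hkey : lam * Real.log (Fintype.card V) ≤ eps / 2) :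
    ∀ m : ℕ, ∀ K : G.Subgraph, ∀ c : ℝ, K.verts.ncard = m → 0 < m → c ≤ d →
      d * (1 - lam * Real.log ((Fintype.card V : ℝ) / m) / eps) ≤ c → c ≤ subAvg K →
      ∃ (H : G.Subgraph) (d' : ℝ), d / 2 ≤ d' ∧ SubIsExpander H d' lam eps := by
  intro m
  induction m using Nat.strong_induction_on with
  | _ m IH =>
  intro K c hm hm0 hcd hinv hKc
  have hd0 : (0:ℝ) < d := lt_of_lt_of_le one_pos hd
  set n := Fintype.card V with hn
  have hmn : m ≤ n := by
    have h := Set.ncard_le_ncard (Set.subset_univ K.verts) Set.finite_univ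
    simpa [Set.ncard_univ, Nat.card_eq_fintype_card, hm] using h
  have hn0 : 0 < n := lt_of_lt_of_le hm0 hmn
  have hmR : (0:ℝ) < (m:ℝ) := by exact_mod_cast hm0
  -- c ≥ d/2
  have hlog_le : Real.log ((n:ℝ)/m) ≤ Real.log n := by
    apply Real.log_le_log (by positivity)
    rw [div_le_iff₀ hmR]
    have h1 : (1:ℝ) ≤ (m:ℝ) := by exact_mod_cast hm0
    have h2 : (m:ℝ) ≤ (n:ℝ) := by exact_mod_cast hmn
    nlinarith
  have hc2 : d / 2 ≤ c := by
    have h1 : lam * Real.log ((n:ℝ)/m) ≤ eps / 2 :=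
      le_trans (by nlinarith) hkey
    have h2 : lam * Real.log ((n:ℝ)/m) / eps ≤ 1/2 := by
      rw [div_le_iff₀ heps0]; nlinarith
    nlinarith
  -- pick a minimal subgraph H ≤ K with subAvg H ≥ c
  haveI : Finite G.Subgraph := my_subgraph_finite G
  have hsfin : (Set.univ : Set G.Subgraph).Finite := Set.finite_univ
  have hfin : ({H : G.Subgraph | H ≤ K ∧ c ≤ subAvg H}).Finite := Set.toFinite _
  obtain ⟨H, hHmem, hHmin⟩ := hfin.toFinset.exists_minimal
    ⟨K, by rw [Set.Finite.mem_toFinset]; exact ⟨le_refl K, hKc⟩⟩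
  rw [Set.Finite.mem_toFinset] at hHmem
  obtain ⟨hHK, hHc⟩ := hHmem
  have hHminimal : SubIsMinimal H c := by
    refine ⟨hHc, fun H' hlt => lt_of_not_ge fun hc' => ?_⟩
    exact hlt.not_ge (hHmin (y := H') (Set.Finite.mem_toFinset _ |>.2 ⟨hlt.le.trans hHK, hc'⟩) hlt.le)
  by_cases hexp : ∀ S : Set V, S ⊆ H.verts →
      (S.ncard : ℝ) ≤ (1 - eps) * H.verts.ncard → subIndAvg H S ≤ (1 - lam) * c
  · exact ⟨H, c, hc2, hHminimal, hexp⟩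
  push_neg at hexp
  obtain ⟨S, hSsub, hScard, hSavg⟩ := hexp
  -- the induced subgraph on S
  set K' := H.induce S with hK'
  have hK'verts : K'.verts = S := rfl
  have hK'avg : subAvg K' = subIndAvg H S := by
    unfold subAvg subIndAvg
    rw [my_induce_edgeSet, hK'verts]
  set m' := S.ncard with hm'
  have hHvle : (H.verts.ncard : ℝ) ≤ (m:ℝ) := by
    exact_mod_cast Nat.cast_le.2 (hm ▸ Set.ncard_le_ncard hHK.1 (Set.toFinite _))
  have hm'le : (m':ℝ) ≤ (1 - eps) * m := by
    refine le_trans hScard ?_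
    have : (0:ℝ) ≤ 1 - eps := by linarith
    nlinarith
  have hm'0 : 0 < m' := by
    rcases Nat.eq_zero_or_pos m' with h0 | h
    · exfalso
      have : subIndAvg H S = 0 := by
        unfold subIndAvg; rw [← hm', h0]; simp
      nlinarith
    · exact h
  have hm'R : (0:ℝ) < (m':ℝ) := by exact_mod_cast hm'0
  have hm'ltm : m' < m := by
    have : (m':ℝ) < m := by nlinarith
    exact_mod_cast this
  -- the log inequality
  have hlogstep : Real.log ((n:ℝ)/m) + eps ≤ Real.log ((n:ℝ)/m') := by
    have hnR : (0:ℝ) < (n:ℝ) := by exact_mod_cast hn0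
    rw [Real.log_div (ne_of_gt hnR) (ne_of_gt hmR),
        Real.log_div (ne_of_gt hnR) (ne_of_gt hm'R)]
    have h1 : Real.log (m':ℝ) ≤ Real.log ((1-eps) * m) := Real.log_le_log hm'R hm'le
    rw [Real.log_mul (by linarith) (ne_of_gt hmR)] at h1
    have h2 : Real.log (1 - eps) ≤ -eps := by
      have := Real.log_le_sub_one_of_pos (show (0:ℝ) < 1 - eps by linarith)
      linarith
    linarith
  -- the new invariant
  have hinv' : d * (1 - lam * Real.log ((n:ℝ)/m') / eps) ≤ (1 - lam) * c :=
    my_arith hd heps0 hlam hlogstep hinv hcd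
  have hc0 : (0:ℝ) ≤ c := le_trans (le_of_lt (by positivity)) hc2
  have hc'd : (1 - lam) * c ≤ d :=
    le_trans (mul_le_of_le_one_left hc0 (sub_le_self 1 hlam.le)) hcd
  have hK'm : K'.verts.ncard = m' := by rw [hK'verts]
  have hK'c : (1 - lam) * c ≤ subAvg K' := by rw [hK'avg]; exact hSavg.le
  exact IH m' hm'ltm K' ((1 - lam) * c) hK'm hm'0 hc'd hinv' hK'c

/-- Every `n`-vertex graph with average degree at least `d ≥ 1` contains a
`(d', λ, ε)`-expander with `d' ≥ d/2`, provided `λ ≤ ε / (2 log n)`. -/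
theorem stmt3 {V : Type*} [Fintype V] (G : SimpleGraph V) (d eps lam : ℝ)
    (hn : 1 ≤ Fintype.card V) (hd : 1 ≤ d) (heps : eps ∈ Set.Ioo (0 : ℝ) 1)
    (hlam : 0 < lam) (hlam2 : lam ≤ eps / (2 * Real.log (Fintype.card V)))
    (hG : d ≤ avgDeg G) :
    ∃ (H : G.Subgraph) (d' : ℝ), d / 2 ≤ d' ∧ SubIsExpander H d' lam eps := by
  obtain ⟨heps0, heps1⟩ := heps
  have hn2 : 2 ≤ Fintype.card V := by
    by_contra h
    have h1 : Fintype.card V = 1 := by omega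
    rw [h1] at hlam2
    simp at hlam2
    linarith
  have hnR : (1:ℝ) < (Fintype.card V : ℝ) := by exact_mod_cast hn2
  have hlogpos : (0:ℝ) < Real.log (Fintype.card V) := Real.log_pos hnR
  have hkey : lam * Real.log (Fintype.card V) ≤ eps / 2 := by
    have h := mul_le_mul_of_nonneg_right hlam2 hlogpos.le
    have heq : eps / (2 * Real.log (Fintype.card V)) * Real.log (Fintype.card V)
        = eps / 2 := by
      field_simp
    linarith [heq ▸ h]
  have hlam1 : lam < 1 := by
    have hl2 : (0.6931471803 : ℝ) < Real.log 2 := Real.log_two_gt_d9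
    have hmono : Real.log 2 ≤ Real.log (Fintype.card V) := by
      apply Real.log_le_log (by norm_num)
      exact_mod_cast hn2
    have hpos : (1:ℝ) < 2 * Real.log (Fintype.card V) := by linarith
    have : eps / (2 * Real.log (Fintype.card V)) < 1 :=
      (div_lt_one (by linarith)).2 (by linarith)
    linarith
  have htop_avg : subAvg (⊤ : G.Subgraph) = avgDeg G := by
    unfold subAvg avgDeg
    rw [SimpleGraph.Subgraph.edgeSet_top, SimpleGraph.Subgraph.verts_top,
      Set.ncard_univ, Nat.card_eq_fintype_card]
  have htopm : (⊤ : G.Subgraph).verts.ncard = Fintype.card V := by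
    rw [SimpleGraph.Subgraph.verts_top, Set.ncard_univ, Nat.card_eq_fintype_card]
  have hinv0 : d * (1 - lam * Real.log ((Fintype.card V : ℝ) / (Fintype.card V : ℕ)) / eps)
      ≤ d := by
    rw [div_self (ne_of_gt (by positivity : (0:ℝ) < ((Fintype.card V : ℕ) : ℝ))), Real.log_one]
    simp
  exact my_aux hd heps0 heps1 hlam hlam1 hkey (Fintype.card V) ⊤ d htopm (by omega) le_rfl
    hinv0 (htop_avg ▸ hG)
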